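/- For i,j,p with i,j ≥ 1 and p ≥ 0, the total number of occurrences of σ = π_{i,j,p} in all permutations of S_n(132,321) equals binomial(n+2, i+j+p+2). Equivalently, the expected number of occurrences of σ in a uniformly random 132- and 321-avoiding permutation of [n] is binomial(n+2, i+j+p+2) / (binomial(n,2)+1). -/

import Mathlib

/-- An occurrence of the pattern `σ` in `π` is a strictly increasing choice of
indices whose images under `π` are order-isomorphic to `σ`. -/
def IsOccurrence {m n : ℕ} (σ : Equiv.Perm (Fin m)) (π : Equiv.Perm (Fin n))
    (f : Fin m → Fin n) : Prop :=
  StrictMono f ∧ ∀ j k : Fin m, π (f j) < π (f k) ↔ σ j < σ k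

/-- `numOcc σ π` is the number of occurrences of the pattern `σ` in `π`. -/
noncomputable def numOcc {m n : ℕ} (σ : Equiv.Perm (Fin m)) (π : Equiv.Perm (Fin n)) : ℕ :=
  Nat.card {f : Fin m → Fin n // IsOccurrence σ π f}

def p123 : Equiv.Perm (Fin 3) := 1
def p132 : Equiv.Perm (Fin 3) := Equiv.swap 1 2
def p213 : Equiv.Perm (Fin 3) := Equiv.swap 0 1
def p321 : Equiv.Perm (Fin 3) := Equiv.swap 0 2
def p231 : Equiv.Perm (Fin 3) := finRotate 3
def p312 : Equiv.Perm (Fin 3) := (finRotate 3)⁻¹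

/-- The composition (direct sum) `σ * τ` of two permutations. -/
def permComp {m n : ℕ} (σ : Equiv.Perm (Fin m)) (τ : Equiv.Perm (Fin n)) :
    Equiv.Perm (Fin (m + n)) :=
  Equiv.permCongr finSumFinEquiv (Equiv.sumCongr σ τ)

/-- Permutations of arbitrary (finite) length. -/
def SPerm := Σ n : ℕ, Equiv.Perm (Fin n)

def SPerm.comp (p q : SPerm) : SPerm := ⟨p.1 + q.1, permComp p.2 q.2⟩

/-- The permutation `(ℓ+1, …, ℓ+k, 1, …, ℓ)` of `[k+ℓ]`. -/
def rotBlock (k ℓ : ℕ) : Equiv.Perm (Fin (k + ℓ)) :=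
  finSumFinEquiv.symm.trans ((Equiv.sumComm (Fin k) (Fin ℓ)).trans
    (finSumFinEquiv.trans (finCongr (Nat.add_comm ℓ k))))

/-- The permutation `(ℓ+1, …, ℓ+k, 1, …, ℓ, k+ℓ+1, …, k+ℓ+m)` of `[k+ℓ+m]`. -/
def piKLM (k ℓ m : ℕ) : Equiv.Perm (Fin (k + ℓ + m)) :=
  permComp (rotBlock k ℓ) (1 : Equiv.Perm (Fin m))

-- new stuff
def klmF (k l y : ℕ) : ℕ := if y < k then y + l else if y < k + l then y - k else y

def klmPerm (n k l : ℕ) (h : k + l ≤ n) : Equiv.Perm (Fin n) where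
  toFun y := ⟨klmF k l y.val, by unfold klmF; split_ifs <;> omega⟩
  invFun y := ⟨klmF l k y.val, by unfold klmF; split_ifs <;> omega⟩
  left_inv y := by ext; simp only [klmF]; split_ifs <;> omega
  right_inv y := by ext; simp only [klmF]; split_ifs <;> omega

@[simp] lemma klmPerm_val {n k l : ℕ} (h : k + l ≤ n) (y : Fin n) :
    ((klmPerm n k l h) y).val = klmF k l y.val := rfl

@[simp] lemma klmPerm_symm_val {n k l : ℕ} (h : k + l ≤ n) (y : Fin n) :
    ((klmPerm n k l h).symm y).val = klmF l k y.val := rfl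

lemma rotBlock_val (i j : ℕ) (x : Fin (i + j)) :
    ((rotBlock i j) x).val = klmF i j x.val := by
  rcases lt_or_ge x.val i with h | h
  · have h1 : finSumFinEquiv.symm x = Sum.inl ⟨x.val, h⟩ := by
      rw [Equiv.symm_apply_eq]; apply Fin.ext; simp
    simp [rotBlock, h1, klmF, h]
    omega
  · have h1 : finSumFinEquiv.symm x = Sum.inr ⟨x.val - i, by omega⟩ := by
      rw [Equiv.symm_apply_eq]; apply Fin.ext; simp; omega
    simp [rotBlock, h1, klmF]
    omega

lemma piKLM_val (i j p : ℕ) (x : Fin (i + j + p)) :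
    ((piKLM i j p) x).val = klmF i j x.val := by
  rcases lt_or_ge x.val (i + j) with h | h
  · have h1 : finSumFinEquiv.symm x = Sum.inl (⟨x.val, h⟩ : Fin (i+j)) := by
      rw [Equiv.symm_apply_eq]; apply Fin.ext; simp
    have h2 := rotBlock_val i j ⟨x.val, h⟩
    simp [piKLM, permComp, h1]
    rw [h2]
  · have h1 : finSumFinEquiv.symm x = Sum.inr (⟨x.val - (i+j), by omega⟩ : Fin p) := by
      rw [Equiv.symm_apply_eq]; apply Fin.ext; simp; omega
    simp [piKLM, permComp, h1, klmF]
    split_ifs <;> omega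

open scoped Classical

lemma numOcc_eq_card {m n : ℕ} (σ : Equiv.Perm (Fin m)) (π : Equiv.Perm (Fin n)) :
    numOcc σ π = (Finset.univ.filter (IsOccurrence σ π)).card := by
  rw [numOcc, Nat.card_eq_fintype_card, Fintype.card_subtype]

lemma numOcc_eq_zero_iff {m n : ℕ} (σ : Equiv.Perm (Fin m)) (π : Equiv.Perm (Fin n)) :
    numOcc σ π = 0 ↔ ∀ f, ¬ IsOccurrence σ π f := by
  rw [numOcc, Nat.card_eq_zero]
  have h : ¬ Infinite {f : Fin m → Fin n // IsOccurrence σ π f} :=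
    not_infinite_iff_finite.2 inferInstance
  simp [isEmpty_subtype, h]

lemma of_isOcc_132 {n : ℕ} {π : Equiv.Perm (Fin n)} {f : Fin 3 → Fin n}
    (h : IsOccurrence p132 π f) :
    ∃ a b c : Fin n, a < b ∧ b < c ∧ π a < π c ∧ π c < π b :=
  ⟨f 0, f 1, f 2, h.1 (by decide), h.1 (by decide),
    (h.2 0 2).2 (by decide), (h.2 2 1).2 (by decide)⟩

lemma of_isOcc_321 {n : ℕ} {π : Equiv.Perm (Fin n)} {f : Fin 3 → Fin n}
    (h : IsOccurrence p321 π f) :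
    ∃ a b c : Fin n, a < b ∧ b < c ∧ π c < π b ∧ π b < π a :=
  ⟨f 0, f 1, f 2, h.1 (by decide), h.1 (by decide),
    (h.2 2 1).2 (by decide), (h.2 1 0).2 (by decide)⟩

def tri {n : ℕ} (a b c : Fin n) : Fin 3 → Fin n :=
  fun x => if x.val = 0 then a else if x.val = 1 then b else c

lemma isOcc_132 {n : ℕ} {π : Equiv.Perm (Fin n)} {a b c : Fin n}
    (hab : a < b) (hbc : b < c) (h1 : π a < π c) (h2 : π c < π b) :
    IsOccurrence p132 π (tri a b c) := by
  have hab' : a.val < b.val := hab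
  have hbc' : b.val < c.val := hbc
  have h1' : (π a).val < (π c).val := h1
  have h2' : (π c).val < (π b).val := h2
  constructor
  · rintro ⟨xv, hx⟩ ⟨yv, hy⟩ hxy
    rw [Fin.mk_lt_mk] at hxy
    interval_cases xv <;> interval_cases yv <;>
      simp only [tri] <;> norm_num <;> rw [Fin.lt_def] <;> omega
  · rintro ⟨uv, hu⟩ ⟨vv, hv⟩
    interval_cases uv <;> interval_cases vv <;>
      simp only [tri] <;> norm_num <;>
      (try simp only [Fin.mk_zero, Fin.mk_one, show ∀ h : 2 < 3, (⟨2, h⟩ : Fin 3) = 2 from fun _ => rfl]) <;>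
      first
        | exact iff_of_true (by rw [Fin.lt_def]; omega) (by decide)
        | exact iff_of_false (by rw [Fin.lt_def]; omega) (by decide)

lemma isOcc_321 {n : ℕ} {π : Equiv.Perm (Fin n)} {a b c : Fin n}
    (hab : a < b) (hbc : b < c) (h1 : π c < π b) (h2 : π b < π a) :
    IsOccurrence p321 π (tri a b c) := by
  have hab' : a.val < b.val := hab
  have hbc' : b.val < c.val := hbc
  have h1' : (π c).val < (π b).val := h1
  have h2' : (π b).val < (π a).val := h2
  constructor
  · rintro ⟨xv, hx⟩ ⟨yv, hy⟩ hxy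
    rw [Fin.mk_lt_mk] at hxy
    interval_cases xv <;> interval_cases yv <;>
      simp only [tri] <;> norm_num <;> rw [Fin.lt_def] <;> omega
  · rintro ⟨uv, hu⟩ ⟨vv, hv⟩
    interval_cases uv <;> interval_cases vv <;>
      simp only [tri] <;> norm_num <;>
      (try simp only [Fin.mk_zero, Fin.mk_one, show ∀ h : 2 < 3, (⟨2, h⟩ : Fin 3) = 2 from fun _ => rfl]) <;>
      first
        | exact iff_of_true (by rw [Fin.lt_def]; omega) (by decide)
        | exact iff_of_false (by rw [Fin.lt_def]; omega) (by decide)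

lemma klm_avoids_132 {n k l : ℕ} (h : k + l ≤ n) : numOcc p132 (klmPerm n k l h) = 0 := by
  rw [numOcc_eq_zero_iff]
  intro f hf
  obtain ⟨a, b, c, hab, hbc, h1, h2⟩ := of_isOcc_132 hf
  have hab' : a.val < b.val := hab
  have hbc' : b.val < c.val := hbc
  have h1' : (klmPerm n k l h a).val < (klmPerm n k l h c).val := h1
  have h2' : (klmPerm n k l h c).val < (klmPerm n k l h b).val := h2
  simp only [klmPerm_val, klmF] at h1' h2'
  split_ifs at h1' h2' <;> omega

lemma klm_avoids_321 {n k l : ℕ} (h : k + l ≤ n) : numOcc p321 (klmPerm n k l h) = 0 := by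
  rw [numOcc_eq_zero_iff]
  intro f hf
  obtain ⟨a, b, c, hab, hbc, h1, h2⟩ := of_isOcc_321 hf
  have hab' : a.val < b.val := hab
  have hbc' : b.val < c.val := hbc
  have h1' : (klmPerm n k l h c).val < (klmPerm n k l h b).val := h1
  have h2' : (klmPerm n k l h b).val < (klmPerm n k l h a).val := h2
  simp only [klmPerm_val, klmF] at h1' h2'
  split_ifs at h1' h2' <;> omega

lemma no_occ_in_one {n i j p : ℕ} (hi : 1 ≤ i) (hj : 1 ≤ j) (f : Fin (i+j+p) → Fin n) :
    ¬ IsOccurrence (piKLM i j p) (1 : Equiv.Perm (Fin n)) f := by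
  intro hf
  have h0i : (0 : ℕ) < i + j + p := by omega
  have hii : i < i + j + p := by omega
  set x0 : Fin (i+j+p) := ⟨0, h0i⟩
  set xi : Fin (i+j+p) := ⟨i, hii⟩
  have hlt : f x0 < f xi := hf.1 (by rw [Fin.mk_lt_mk]; omega)
  have := (hf.2 x0 xi).1 (by simpa using hlt)
  have hv : ((piKLM i j p) x0).val < ((piKLM i j p) xi).val := this
  rw [piKLM_val, piKLM_val] at hv
  change klmF i j 0 < klmF i j i at hv
  simp only [klmF] at hv
  split_ifs at hv <;> omega

def permVal {n : ℕ} (π : Equiv.Perm (Fin n)) (y : ℕ) : ℕ :=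
  if hy : y < n then (π ⟨y, hy⟩).val else y

lemma permVal_lt {n : ℕ} (π : Equiv.Perm (Fin n)) {y : ℕ} (hy : y < n) :
    permVal π y < n := by
  simp only [permVal, dif_pos hy]; exact (π ⟨y, hy⟩).isLt

lemma permVal_inj {n : ℕ} (π : Equiv.Perm (Fin n)) {y z : ℕ} (hy : y < n) (hz : z < n)
    (h : permVal π y = permVal π z) : y = z := by
  simp only [permVal, dif_pos hy, dif_pos hz] at h
  have := π.injective (Fin.ext h : π ⟨y, hy⟩ = π ⟨z, hz⟩)
  exact congrArg Fin.val this

lemma permVal_surj {n : ℕ} (π : Equiv.Perm (Fin n)) {v : ℕ} (hv : v < n) :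
    ∃ z, z < n ∧ permVal π z = v := by
  refine ⟨(π.symm ⟨v, hv⟩).val, (π.symm ⟨v, hv⟩).isLt, ?_⟩
  simp only [permVal, dif_pos (π.symm ⟨v, hv⟩).isLt]
  rw [show (⟨(π.symm ⟨v, hv⟩).val, _⟩ : Fin n) = π.symm ⟨v, hv⟩ from rfl, Equiv.apply_symm_apply]

lemma no132' {n : ℕ} {π : Equiv.Perm (Fin n)} (h132 : numOcc p132 π = 0) :
    ∀ a b c : ℕ, a < b → b < c → c < n →
      permVal π a < permVal π c → permVal π c < permVal π b → False := by
  intro a b c hab hbc hc h1 h2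
  have ha : a < n := by omega
  have hb : b < n := by omega
  simp only [permVal, dif_pos ha, dif_pos hb, dif_pos hc] at h1 h2
  exact (numOcc_eq_zero_iff _ _).1 h132 _
    (isOcc_132 (π := π) (Fin.mk_lt_mk.2 hab) (Fin.mk_lt_mk.2 hbc) h1 h2)

lemma no321' {n : ℕ} {π : Equiv.Perm (Fin n)} (h321 : numOcc p321 π = 0) :
    ∀ a b c : ℕ, a < b → b < c → c < n →
      permVal π c < permVal π b → permVal π b < permVal π a → False := by
  intro a b c hab hbc hc h1 h2
  have ha : a < n := by omega
  have hb : b < n := by omega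
  simp only [permVal, dif_pos ha, dif_pos hb, dif_pos hc] at h1 h2
  exact (numOcc_eq_zero_iff _ _).1 h321 _
    (isOcc_321 (π := π) (Fin.mk_lt_mk.2 hab) (Fin.mk_lt_mk.2 hbc) h1 h2)

lemma perm_eq_one_of_no_inversion {n : ℕ} {π : Equiv.Perm (Fin n)}
    (h : ∀ a b : ℕ, a < b → b < n → permVal π a < permVal π b) : π = 1 := by
  have mono : ∀ y, y < n → y ≤ permVal π y := by
    intro y
    induction y with
    | zero => omega
    | succ m ih =>
      intro hy
      have h1 := h m (m+1) (by omega) hy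
      have := ih (by omega)
      omega
  have antimono : ∀ t y, y + t = n - 1 → y < n → permVal π y ≤ y := by
    intro t
    induction t with
    | zero => intro y h1 h2; have := permVal_lt π h2; omega
    | succ m ih =>
      intro y h1 h2
      have h3 := ih (y+1) (by omega) (by omega)
      have h4 := h y (y+1) (by omega) (by omega)
      omega
  ext x
  have hx := x.isLt
  have h1 := mono x.val hx
  have h2 := antimono (n - 1 - x.val) x.val (by omega) hx
  have : permVal π x.val = x.val := by omega
  simp only [permVal, dif_pos hx] at this
  simpa [Fin.ext_iff] using this

lemma classify {n : ℕ} (π : Equiv.Perm (Fin n))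
    (h132 : numOcc p132 π = 0) (h321 : numOcc p321 π = 0) :
    π = 1 ∨ ∃ (k l : ℕ) (h : k + l ≤ n), 1 ≤ k ∧ 1 ≤ l ∧ π = klmPerm n k l h := by
  by_cases hone : π = 1
  · exact Or.inl hone
  right
  -- there is an inversion
  have hinv : ∃ a b : ℕ, a < b ∧ b < n ∧ permVal π b < permVal π a := by
    by_contra hno
    push_neg at hno
    apply hone
    apply perm_eq_one_of_no_inversion
    intro a b hab hb
    have h1 := hno a b hab hb
    have h2 : permVal π a ≠ permVal π b := fun h => by
      have := permVal_inj π (by omega) hb h; omega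
    omega
  obtain ⟨a0, b0, hab0, hb0, hinv0⟩ := hinv
  have hn : 0 < n := by omega
  -- P 0 = l ≥ 1
  have hP0 : 1 ≤ permVal π 0 := by
    rcases Nat.eq_zero_or_pos (permVal π 0) with h0 | h0
    · exfalso
      have ha0 : 0 < a0 := by
        rcases Nat.eq_zero_or_pos a0 with h | h
        · rw [h] at hinv0; omega
        · exact h
      have hb0ne : permVal π b0 ≠ 0 := by
        intro h
        have := permVal_inj π hb0 hn (by omega)
        omega
      exact no132' h132 0 a0 b0 ha0 hab0 hb0 (by omega) hinv0
    · exact h0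
  set l := permVal π 0 with hl
  have hln : l < n := permVal_lt π hn
  -- k = position of value 0
  obtain ⟨k, hkn, hPk⟩ := permVal_surj π hn
  have hk1 : 1 ≤ k := by
    rcases Nat.eq_zero_or_pos k with h | h
    · exfalso; rw [h] at hPk; omega
    · exact h
  have small_pos : ∀ y, y < n → permVal π y < l → k ≤ y := by
    intro y hy hsmall
    by_contra hyk
    push_neg at hyk
    have hy0 : 0 < y := by
      rcases Nat.eq_zero_or_pos y with h | h
      · exfalso; rw [h] at hsmall; omega
      · exact h
    have hyne : permVal π y ≠ 0 := by
      intro h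
      have := permVal_inj π hy hkn (by omega); omega
    exact no321' h321 0 y k hy0 (by omega) hkn (by omega) (by omega)
  have small_incr : ∀ y z, y < z → z < n → permVal π y < l → permVal π z < l →
      permVal π y < permVal π z := by
    intro y z hyz hz hys hzs
    by_contra hc
    push_neg at hc
    have hne : permVal π y ≠ permVal π z := fun h => by
      have := permVal_inj π (by omega) hz h; omega
    have hy0 : 0 < y := by
      have := small_pos y (by omega) hys; omega
    exact no321' h321 0 y z hy0 hyz hz (by omega) (by omega)
  have big_incr : ∀ y z, y < z → z < n → l ≤ permVal π y → l ≤ permVal π z →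
      permVal π y < permVal π z := by
    intro y z hyz hz hyb hzb
    by_contra hc
    push_neg at hc
    have hne : permVal π y ≠ permVal π z := fun h => by
      have := permVal_inj π (by omega) hz h; omega
    have hy0 : 0 < y := by
      rcases Nat.eq_zero_or_pos y with h | h
      · exfalso; subst h; omega
      · exact h
    have hz0 : permVal π z ≠ l := fun h => by
      have := permVal_inj π hz hn (by rw [h]); omega
    exact no132' h132 0 y z hy0 hyz hz (by omega) (by omega)
  have no_big_between : ∀ y z, k ≤ y → y < z → z < n → l ≤ permVal π y →
      permVal π z < l → False := by
    intro y z hky hyz hz hyb hzs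
    have hyk : k < y := by
      rcases Nat.eq_or_lt_of_le hky with h | h
      · exfalso; rw [← h] at hyb; omega
      · exact h
    have hz0 : permVal π z ≠ 0 := fun h => by
      have := permVal_inj π hz hkn (by omega); omega
    exact no132' h132 k y z hyk hyz hz (by omega) (by omega)
  -- the main pointwise claim
  have claim : ∀ y, y < n → permVal π y = klmF k l y := by
    intro y
    induction y using Nat.strong_induction_on with
    | _ y IH =>
    intro hy
    rcases Nat.eq_zero_or_pos y with hy0 | hy0
    · subst hy0
      simp only [klmF, if_pos (show 0 < k by omega)]
      omega
    rcases lt_or_ge y k with hyk | hyk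
    · -- 0 < y < k : P y = y + l
      have hbig : l ≤ permVal π y := by
        by_contra hc
        push_neg at hc
        have := small_pos y hy hc
        omega
      have hprev : permVal π (y-1) = klmF k l (y-1) := IH (y-1) (by omega) (by omega)
      have hprev' : permVal π (y-1) = (y-1) + l := by
        rw [hprev]; simp only [klmF, if_pos (show y-1 < k by omega)]
      have hgt : (y-1) + l < permVal π y := by
        rw [← hprev']
        exact big_incr (y-1) y (by omega) hy (by omega) hbig
      -- show P y ≤ y + l
      by_contra hc
      have hPy : y + l < permVal π y := by
        simp only [klmF, if_pos hyk] at hc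
        omega
      obtain ⟨z, hz, hPz⟩ := permVal_surj π (show y + l < n by
        have := permVal_lt π hy; omega)
      have hzy : z ≠ y := fun h => by rw [h] at hPz; omega
      rcases lt_or_ge z y with hzlt | hzgt
      · have hzk : permVal π z = klmF k l z := IH z hzlt (by omega)
        rw [hPz] at hzk
        simp only [klmF] at hzk
        split_ifs at hzk <;> omega
      · have : permVal π y < permVal π z :=
          big_incr y z (by omega) hz (by omega) (by omega)
        omega
    rcases lt_or_ge y (k + l) with hykl | hykl
    · -- k ≤ y < k + l : P y = y - k
      rcases Nat.eq_or_lt_of_le hyk with hke | hke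
      · have hy0' : permVal π y = 0 := by rw [← hke]; exact hPk
        simp only [klmF]
        split_ifs <;> omega
      -- k < y
      have hsmall : permVal π y < l := by
        by_contra hc
        push_neg at hc
        have hvn : y - k < n := by omega
        obtain ⟨z, hz, hPz⟩ := permVal_surj π hvn
        have hzk : k ≤ z := small_pos z hz (by omega)
        have hzy : z ≠ y := fun h => by rw [h] at hPz; omega
        rcases lt_or_ge z y with hzlt | hzgt
        · have h1 : permVal π z = klmF k l z := IH z hzlt hz
          rw [hPz] at h1
          simp only [klmF] at h1
          split_ifs at h1 <;> omega
        · exact no_big_between y z hyk (by omega) hz hc (by omega)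
      have hprev : permVal π (y-1) = klmF k l (y-1) := IH (y-1) (by omega) (by omega)
      have hprev' : permVal π (y-1) = (y-1) - k := by
        rw [hprev]; simp only [klmF]; split_ifs <;> omega
      have hgt : (y-1) - k < permVal π y := by
        rw [← hprev']
        exact small_incr (y-1) y (by omega) hy (by omega) hsmall
      -- show P y ≤ y - k
      by_contra hc
      have hPy : y - k < permVal π y := by
        simp only [klmF] at hc
        split_ifs at hc <;> omega
      obtain ⟨z, hz, hPz⟩ := permVal_surj π (show y - k < n by omega)
      have hzpos : k ≤ z := small_pos z hz (by omega)
      have hzy : z ≠ y := fun h => by rw [h] at hPz; omega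
      rcases lt_or_ge z y with hzlt | hzgt
      · have h1 : permVal π z = klmF k l z := IH z hzlt hz
        rw [hPz] at h1
        simp only [klmF] at h1
        split_ifs at h1 <;> omega
      · have := small_incr y z (by omega) hz hsmall (by omega)
        omega
    · -- y ≥ k + l : P y = y
      have hbig : l ≤ permVal π y := by
        by_contra hc
        push_neg at hc
        have hw : k + permVal π y < n := by omega
        have h1 : permVal π (k + permVal π y) = klmF k l (k + permVal π y) :=
          IH (k + permVal π y) (by omega) hw
        have h2 : permVal π (k + permVal π y) = permVal π y := by
          rw [h1]; simp only [klmF]; split_ifs <;> omega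
        have := permVal_inj π hw hy h2
        omega
      have hyge : y ≤ permVal π y := by
        by_contra hc
        push_neg at hc
        set v := permVal π y with hv
        have hvl : l ≤ v := hbig
        rcases lt_or_ge v (k + l) with hvkl | hvkl
        · have h1 : permVal π (v - l) = klmF k l (v - l) := IH (v - l) (by omega) (by omega)
          have h2 : permVal π (v - l) = v := by
            rw [h1]; simp only [klmF]; split_ifs <;> omega
          have := permVal_inj π (by omega) hy h2
          omega
        · have h1 : permVal π v = klmF k l v := IH v (by omega) (by omega)
          have h2 : permVal π v = v := by
            rw [h1]; simp only [klmF]; split_ifs <;> omega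
          have := permVal_inj π (by omega) hy h2
          omega
      have hyle : permVal π y ≤ y := by
        by_contra hc
        push_neg at hc
        obtain ⟨z, hz, hPz⟩ := permVal_surj π hy
        have hzy : z ≠ y := fun h => by rw [h] at hPz; omega
        rcases lt_or_ge z y with hzlt | hzgt
        · have h1 : permVal π z = klmF k l z := IH z hzlt hz
          rw [hPz] at h1
          simp only [klmF] at h1
          split_ifs at h1 <;> omega
        · have := big_incr y z (by omega) hz hbig (by omega)
          omega
      simp only [klmF]
      split_ifs <;> omega
  -- k + l ≤ n
  have hkl : k + l ≤ n := by
    obtain ⟨z, hz, hPz⟩ := permVal_surj π (show l - 1 < n by omega)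
    have h1 : permVal π z = klmF k l z := claim z hz
    rw [hPz] at h1
    simp only [klmF] at h1
    split_ifs at h1 <;> omega
  refine ⟨k, l, hkl, hk1, hP0, ?_⟩
  ext x
  have hx := x.isLt
  have := claim x.val hx
  simp only [permVal, dif_pos hx] at this
  simpa [Fin.ext_iff, klmPerm_val] using this

set_option maxHeartbeats 2000000 in
lemma isOcc_klm_iff {n i j p k l : ℕ} (hi : 1 ≤ i) (hj : 1 ≤ j) (h : k + l ≤ n)
    (f : Fin (i+j+p) → Fin n) :
    IsOccurrence (piKLM i j p) (klmPerm n k l h) f ↔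
      (StrictMono f ∧
       (∀ x : Fin (i+j+p), x.val < i → (f x).val < k) ∧
       (∀ x : Fin (i+j+p), i ≤ x.val → x.val < i+j → k ≤ (f x).val ∧ (f x).val < k+l) ∧
       (∀ x : Fin (i+j+p), i+j ≤ x.val → k+l ≤ (f x).val)) := by
  constructor
  · rintro ⟨mono, hiff⟩
    have hmid : ∀ x : Fin (i+j+p), i ≤ x.val → x.val < i+j →
        ((f ⟨0, by omega⟩).val < k ∧ k ≤ (f x).val ∧ (f x).val < k+l) := by
      intro x hx1 hx2
      have hlt : f ⟨0, by omega⟩ < f x := mono (by rw [Fin.mk_lt_mk]; omega)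
      have hlt' : (f ⟨0, by omega⟩).val < (f x).val := hlt
      have h1 : klmPerm n k l h (f x) < klmPerm n k l h (f ⟨0, by omega⟩) :=
        (hiff x ⟨0, by omega⟩).2 (by
          rw [Fin.lt_def, piKLM_val, piKLM_val]
          simp only [klmF]
          split_ifs <;> omega)
      have h1' : klmF k l (f x).val < klmF k l (f ⟨0, by omega⟩).val := by
        have := Fin.lt_def.1 h1
        rwa [klmPerm_val, klmPerm_val] at this
      simp only [klmF] at h1'
      split_ifs at h1' <;> omega
    have hfirst : ∀ x : Fin (i+j+p), x.val < i → (f x).val < k := by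
      intro x hx
      have hmi := hmid ⟨i, by omega⟩ (by simp) (by simp; omega)
      have hlt' : (f x).val < (f ⟨i, by omega⟩).val := mono (by rw [Fin.mk_lt_mk]; omega)
      have h1 : klmPerm n k l h (f ⟨i, by omega⟩) < klmPerm n k l h (f x) :=
        (hiff ⟨i, by omega⟩ x).2 (by
          rw [Fin.lt_def, piKLM_val, piKLM_val]
          simp only [klmF]
          split_ifs <;> omega)
      have h1' : klmF k l (f ⟨i, by omega⟩).val < klmF k l (f x).val := by
        have := Fin.lt_def.1 h1
        rwa [klmPerm_val, klmPerm_val] at this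
      simp only [klmF] at h1'
      split_ifs at h1' <;> omega
    refine ⟨mono, hfirst, fun x hx1 hx2 => (hmid x hx1 hx2).2, ?_⟩
    intro x hx
    have hm := hmid ⟨i+j-1, by omega⟩ (by simp; omega) (by simp; omega)
    have hlt' : (f ⟨i+j-1, by omega⟩).val < (f x).val := mono (by rw [Fin.mk_lt_mk]; omega)
    have h0k : (f ⟨0, by omega⟩).val < k := hm.1
    have h1 : klmPerm n k l h (f ⟨0, by omega⟩) < klmPerm n k l h (f x) :=
      (hiff ⟨0, by omega⟩ x).2 (by
        rw [Fin.lt_def, piKLM_val, piKLM_val]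
        simp only [klmF]
        split_ifs <;> omega)
    have h1' : klmF k l (f ⟨0, by omega⟩).val < klmF k l (f x).val := by
      have := Fin.lt_def.1 h1
      rwa [klmPerm_val, klmPerm_val] at this
    simp only [klmF] at h1'
    split_ifs at h1' <;> omega
  · rintro ⟨mono, hb1, hb2, hb3⟩
    refine ⟨mono, ?_⟩
    intro u v
    have hu1 := hb1 u
    have hu2 := hb2 u
    have hu3 := hb3 u
    have hv1 := hb1 v
    have hv2 := hb2 v
    have hv3 := hb3 v
    have huv : (f u).val < (f v).val ↔ u.val < v.val := by
      rw [← Fin.lt_def, ← Fin.lt_def]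
      exact mono.lt_iff_lt
    have hu := u.isLt
    have hv := v.isLt
    rw [Fin.lt_def, Fin.lt_def, klmPerm_val, klmPerm_val, piKLM_val, piKLM_val]
    simp only [klmF]
    split_ifs <;> omega

def kOf {n : ℕ} (π : Equiv.Perm (Fin n)) : ℕ :=
  if h : 0 < n then (π.symm ⟨0, h⟩).val else 0

def lOf {n : ℕ} (π : Equiv.Perm (Fin n)) : ℕ :=
  if h : 0 < n then (π ⟨0, h⟩).val else 0

lemma kOf_klm {n k l : ℕ} (hk : 1 ≤ k) (hl : 1 ≤ l) (h : k + l ≤ n) :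
    kOf (klmPerm n k l h) = k := by
  have hn : 0 < n := by omega
  simp only [kOf, dif_pos hn]
  have : ((klmPerm n k l h).symm ⟨0, hn⟩).val = klmF l k 0 := rfl
  rw [this]
  simp only [klmF]
  split_ifs <;> omega

lemma lOf_klm {n k l : ℕ} (hk : 1 ≤ k) (hl : 1 ≤ l) (h : k + l ≤ n) :
    lOf (klmPerm n k l h) = l := by
  have hn : 0 < n := by omega
  simp only [lOf, dif_pos hn]
  have : ((klmPerm n k l h) ⟨0, hn⟩).val = klmF k l 0 := rfl
  rw [this]
  simp only [klmF]
  split_ifs <;> omega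

def fToNat {n m : ℕ} (f : Fin m → Fin n) (y : ℕ) : ℕ :=
  if h : y < m then (f ⟨y, h⟩).val else 0

def glueF (i j k l : ℕ) (g : ℕ → ℕ) (x : ℕ) : ℕ :=
  if x < i then g x
  else if x = i then k
  else if x ≤ i + j then g (x-1) + 1
  else if x = i + j + 1 then k + l + 1
  else g (x - 2) + 2

def encKL (i j p k l : ℕ) (g : ℕ → ℕ) : Finset ℕ :=
  (Finset.range (i+j+p+2)).image (glueF i j k l g)

noncomputable def enc {n : ℕ} (i j p : ℕ) (π : Equiv.Perm (Fin n)) (f : Fin (i+j+p) → Fin n) :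
    Finset ℕ :=
  encKL i j p (kOf π) (lOf π) (fToNat f)

section Glue

variable {n i j p k l : ℕ} {f : Fin (i+j+p) → Fin n}

structure GlueHyp (i j p k l : ℕ) (n : ℕ) (f : Fin (i+j+p) → Fin n) : Prop where
  hi : 1 ≤ i
  hj : 1 ≤ j
  hk : 1 ≤ k
  hl : 1 ≤ l
  hkl : k + l ≤ n
  mono : ∀ a b, a < b → b < i+j+p → fToNat f a < fToNat f b
  b1 : ∀ a, a < i → fToNat f a < k
  b2 : ∀ a, i ≤ a → a < i+j → k ≤ fToNat f a ∧ fToNat f a < k+l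
  b3 : ∀ a, i+j ≤ a → a < i+j+p → k+l ≤ fToNat f a ∧ fToNat f a < n

lemma glueHyp_of_occ (hi : 1 ≤ i) (hj : 1 ≤ j) (hk : 1 ≤ k) (hl : 1 ≤ l) (hkl : k + l ≤ n)
    (hocc : IsOccurrence (piKLM i j p) (klmPerm n k l hkl) f) : GlueHyp i j p k l n f := by
  rw [isOcc_klm_iff hi hj] at hocc
  obtain ⟨mono, hb1, hb2, hb3⟩ := hocc
  refine ⟨hi, hj, hk, hl, hkl, ?_, ?_, ?_, ?_⟩
  · intro a b hab hb
    simp only [fToNat, dif_pos (show a < i+j+p by omega), dif_pos hb]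
    exact mono (Fin.mk_lt_mk.2 hab)
  · intro a ha
    simp only [fToNat, dif_pos (show a < i+j+p by omega)]
    exact hb1 _ ha
  · intro a ha1 ha2
    simp only [fToNat, dif_pos (show a < i+j+p by omega)]
    exact hb2 _ ha1 ha2
  · intro a ha1 ha2
    simp only [fToNat, dif_pos ha2]
    exact ⟨(hb3 _ ha1), (f ⟨a, ha2⟩).isLt⟩

lemma glue_mono_succ (H : GlueHyp i j p k l n f) :
    ∀ x, x + 1 < i+j+p+2 →
      glueF i j k l (fToNat f) x < glueF i j k l (fToNat f) (x+1) := by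
  intro x hx
  obtain ⟨hi, hj, hk, hl, hkl, hm, hb1, hb2, hb3⟩ := H
  have m1 := hm x (x+1)
  have m2 := hm (x-1) x
  have m3 := hm (x-2) (x-1)
  have bx1 := hb1 x; have bx2 := hb2 x; have bx3 := hb3 x
  have bx1' := hb1 (x-1); have bx2' := hb2 (x-1); have bx3' := hb3 (x-1)
  have bx1'' := hb1 (x+1); have bx2'' := hb2 (x+1); have bx3'' := hb3 (x+1)
  simp only [glueF, show x+1-1 = x from by omega, show x+1-2 = x-1 from by omega]
  split_ifs <;> omega

lemma glue_mono (H : GlueHyp i j p k l n f) :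
    ∀ x y, x < y → y < i+j+p+2 →
      glueF i j k l (fToNat f) x < glueF i j k l (fToNat f) y := by
  intro x y
  induction y with
  | zero => omega
  | succ m ih =>
    intro hxy hy
    rcases Nat.lt_or_ge x m with h | h
    · exact (ih h (by omega)).trans (glue_mono_succ H m (by omega))
    · have : x = m := by omega
      subst this
      exact glue_mono_succ H x (by omega)

lemma glue_bound (H : GlueHyp i j p k l n f) :
    ∀ x, x < i+j+p+2 → glueF i j k l (fToNat f) x < n + 2 := by
  intro x hx
  obtain ⟨hi, hj, hk, hl, hkl, hm, hb1, hb2, hb3⟩ := H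
  have bx1 := hb1 x
  have bx2 := hb2 (x-1)
  have bx3 := hb3 (x-2)
  simp only [glueF]
  split_ifs <;> omega

lemma encKL_mem (H : GlueHyp i j p k l n f) :
    encKL i j p k l (fToNat f) ∈ (Finset.range (n+2)).powersetCard (i+j+p+2) := by
  rw [Finset.mem_powersetCard]
  constructor
  · intro v hv
    rw [encKL, Finset.mem_image] at hv
    obtain ⟨x, hx, rfl⟩ := hv
    rw [Finset.mem_range] at hx ⊢
    exact glue_bound H x hx
  · rw [encKL, Finset.card_image_of_injOn, Finset.card_range]
    intro x hx y hy hxy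
    simp only [Finset.coe_range, Set.mem_Iio] at hx hy
    rcases lt_trichotomy x y with h | h | h
    · exact absurd hxy (Nat.ne_of_lt (glue_mono H x y h hy))
    · exact h
    · exact absurd hxy.symm (Nat.ne_of_lt (glue_mono H y x h hx))

end Glue

section Unique

variable {n i j p : ℕ}

lemma encKL_card {k l : ℕ} {f : Fin (i+j+p) → Fin n} (H : GlueHyp i j p k l n f) :
    (encKL i j p k l (fToNat f)).card = i+j+p+2 :=
  (Finset.mem_powersetCard.1 (encKL_mem H)).2

lemma glue_eq_of_encKL_eq {k1 l1 k2 l2 : ℕ} {f1 f2 : Fin (i+j+p) → Fin n}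
    (H1 : GlueHyp i j p k1 l1 n f1) (H2 : GlueHyp i j p k2 l2 n f2)
    (h : encKL i j p k1 l1 (fToNat f1) = encKL i j p k2 l2 (fToNat f2)) :
    ∀ x, x < i+j+p+2 → glueF i j k1 l1 (fToNat f1) x = glueF i j k2 l2 (fToNat f2) x := by
  intro x hx
  have e1 : (fun x : Fin (i+j+p+2) => glueF i j k1 l1 (fToNat f1) x.val) =
      (encKL i j p k2 l2 (fToNat f2)).orderEmbOfFin (encKL_card H2) := by
    apply Finset.orderEmbOfFin_unique
    · intro y
      rw [← h, encKL, Finset.mem_image]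
      exact ⟨y.val, Finset.mem_range.2 y.isLt, rfl⟩
    · intro a b hab
      exact glue_mono H1 a.val b.val hab b.isLt
  have e2 : (fun x : Fin (i+j+p+2) => glueF i j k2 l2 (fToNat f2) x.val) =
      (encKL i j p k2 l2 (fToNat f2)).orderEmbOfFin (encKL_card H2) := by
    apply Finset.orderEmbOfFin_unique
    · intro y
      rw [encKL, Finset.mem_image]
      exact ⟨y.val, Finset.mem_range.2 y.isLt, rfl⟩
    · intro a b hab
      exact glue_mono H2 a.val b.val hab b.isLt
  have := e1.trans e2.symm
  exact congrFun this ⟨x, hx⟩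

lemma glue_at_i (k l : ℕ) (g : ℕ → ℕ) : glueF i j k l g i = k := by
  simp only [glueF]
  split_ifs <;> omega

lemma glue_at_ij1 (k l : ℕ) (g : ℕ → ℕ) (hj : 1 ≤ j) :
    glueF i j k l g (i+j+1) = k + l + 1 := by
  simp only [glueF]
  split_ifs <;> omega

lemma glue_at_lo (k l : ℕ) (g : ℕ → ℕ) {a : ℕ} (ha : a < i) : glueF i j k l g a = g a := by
  simp only [glueF]
  split_ifs <;> first | rfl | omega

lemma glue_at_mid (k l : ℕ) (g : ℕ → ℕ) {a : ℕ} (ha1 : i ≤ a) (ha2 : a < i + j) :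
    glueF i j k l g (a+1) = g a + 1 := by
  simp only [glueF, show a+1-1 = a from by omega]
  split_ifs <;> omega

lemma glue_at_hi (k l : ℕ) (g : ℕ → ℕ) {a : ℕ} (ha : i + j ≤ a) :
    glueF i j k l g (a+2) = g a + 2 := by
  simp only [glueF, show a+2-2 = a from by omega]
  split_ifs <;> omega

end Unique

lemma encKL_surj {n i j p : ℕ} (hi : 1 ≤ i) (hj : 1 ≤ j) (T0 : Finset ℕ)
    (hT0 : T0 ∈ (Finset.range (n+2)).powersetCard (i+j+p+2)) :
    ∃ (k l : ℕ) (hkl : k + l ≤ n) (f : Fin (i+j+p) → Fin n),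
      1 ≤ k ∧ 1 ≤ l ∧ IsOccurrence (piKLM i j p) (klmPerm n k l hkl) f ∧
      encKL i j p k l (fToNat f) = T0 := by
  obtain ⟨hsub, hcard⟩ := Finset.mem_powersetCard.1 hT0
  set t := T0.orderEmbOfFin hcard with ht
  set tN : ℕ → ℕ := fun y => if h : y < i+j+p+2 then (t ⟨y, h⟩ : ℕ) else y + n + 2 with htN
  have htmem : ∀ y, y < i+j+p+2 → tN y ∈ T0 := by
    intro y hy
    simp only [htN, dif_pos hy]
    exact Finset.orderEmbOfFin_mem T0 hcard ⟨y, hy⟩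
  have htle : ∀ y, y < i+j+p+2 → tN y ≤ n + 1 := by
    intro y hy
    have := hsub (htmem y hy)
    rw [Finset.mem_range] at this
    omega
  have htmono : ∀ a b, a < b → tN a < tN b := by
    intro a b hab
    rcases lt_or_ge b (i+j+p+2) with hb | hb
    · simp only [htN, dif_pos hb, dif_pos (show a < i+j+p+2 by omega)]
      exact t.strictMono (Fin.mk_lt_mk.2 hab)
    · rcases lt_or_ge a (i+j+p+2) with ha | ha
      · have := htle a ha
        simp only [htN, dif_pos ha, dif_neg (show ¬ b < i+j+p+2 by omega)] at *
        omega
      · simp only [htN, dif_neg (show ¬ a < i+j+p+2 by omega),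
          dif_neg (show ¬ b < i+j+p+2 by omega)]
        omega
  have htge : ∀ a, a ≤ tN a := by
    intro a
    induction a with
    | zero => omega
    | succ m ih => have := htmono m (m+1) (by omega); omega
  have hl1 : tN i + 2 ≤ tN (i+j+1) := by
    have h1 := htmono i (i+j) (by omega)
    have h2 := htmono (i+j) (i+j+1) (by omega)
    omega
  have hki : i ≤ tN i := htge i
  have hkl : tN i + (tN (i+j+1) - tN i - 1) ≤ n := by
    have := htle (i+j+1) (by omega)
    omega
  set k := tN i with hkdef
  set l := tN (i+j+1) - tN i - 1 with hldef
  set fv : ℕ → ℕ := fun a => if a < i then tN a else if a < i+j then tN (a+1) - 1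
    else tN (a+2) - 2 with hfv
  have hfvn : ∀ a, a < i+j+p → fv a < n := by
    intro a ha
    have h1 := htmono a i
    have h2 := htmono (a+1) (i+j+1)
    have h3 := htle (a+2) (by omega)
    have h4 := htle (a+1) (by omega)
    have h5 := htge (a+2)
    simp only [hfv]
    split_ifs <;> omega
  set f : Fin (i+j+p) → Fin n := fun x => ⟨fv x.val, hfvn x.val x.isLt⟩ with hf
  have hfN : ∀ a, a < i+j+p → fToNat f a = fv a := by
    intro a ha
    simp only [fToNat, dif_pos ha, hf]
  have hb1 : ∀ a, a < i → fv a < k := by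
    intro a ha
    have := htmono a i ha
    simp only [hfv, if_pos ha]
    omega
  have hb2 : ∀ a, i ≤ a → a < i+j → k ≤ fv a ∧ fv a < k + l := by
    intro a ha1 ha2
    have h1 := htmono i (a+1) (by omega)
    have h2 := htmono (a+1) (i+j+1) (by omega)
    simp only [hfv, if_neg (show ¬ a < i by omega), if_pos ha2]
    omega
  have hb3 : ∀ a, i+j ≤ a → a < i+j+p → k + l ≤ fv a ∧ fv a < n := by
    intro a ha1 ha2
    have h1 := htmono (i+j+1) (a+2) (by omega)
    have h2 := htle (a+2) (by omega)
    simp only [hfv, if_neg (show ¬ a < i by omega), if_neg (show ¬ a < i+j by omega)]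
    omega
  have hmono : StrictMono f := by
    intro x y hxy
    have hxy' : x.val < y.val := hxy
    have hy := y.isLt
    rw [Fin.lt_def]
    show fv x.val < fv y.val
    have m1 := htmono x.val y.val hxy'
    have m2 := htmono (x.val+1) (y.val+1) (by omega)
    have m3 := htmono (x.val+2) (y.val+2) (by omega)
    have m4 := htmono (x.val+1) (i+j+1)
    have m5 := htmono (x.val) i
    have m6 := htmono i (y.val+1)
    have m7 := htmono (i+j+1) (y.val+2)
    have h2 := htle (y.val+2) (by omega)
    simp only [hfv]
    split_ifs <;> omega
  have hocc : IsOccurrence (piKLM i j p) (klmPerm n k l hkl) f := by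
    rw [isOcc_klm_iff hi hj]
    refine ⟨hmono, ?_, ?_, ?_⟩
    · intro x hx
      exact hb1 x.val hx
    · intro x hx1 hx2
      exact hb2 x.val hx1 hx2
    · intro x hx
      exact (hb3 x.val hx x.isLt).1
  refine ⟨k, l, hkl, f, by omega, by omega, hocc, ?_⟩
  have hglue : ∀ x, x < i+j+p+2 → glueF i j k l (fToNat f) x = tN x := by
    intro x hx
    simp only [glueF]
    split_ifs with h1 h2 h3 h4
    · rw [hfN x (by omega)]
      simp only [hfv, if_pos h1]
    · subst h2; rfl
    · rw [hfN (x-1) (by omega)]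
      simp only [hfv, if_neg (show ¬ x-1 < i by omega), if_pos (show x-1 < i+j by omega)]
      have := htge x
      rw [show x-1+1 = x from by omega]
      omega
    · subst h4
      omega
    · rw [hfN (x-2) (by omega)]
      simp only [hfv, if_neg (show ¬ x-2 < i by omega), if_neg (show ¬ x-2 < i+j by omega)]
      have := htge x
      rw [show x-2+2 = x from by omega]
      omega
  apply Finset.eq_of_subset_of_card_le
  · intro v hv
    rw [encKL, Finset.mem_image] at hv
    obtain ⟨x, hx, rfl⟩ := hv
    rw [Finset.mem_range] at hx
    rw [hglue x hx]
    exact htmem x hx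
  · rw [hcard, encKL, Finset.card_image_of_injOn, Finset.card_range]
    intro x hx y hy hxy
    simp only [Finset.coe_range, Set.mem_Iio] at hx hy
    rw [hglue x hx, hglue y hy] at hxy
    rcases lt_trichotomy x y with h | h | h
    · exact absurd hxy (Nat.ne_of_lt (htmono x y h))
    · exact h
    · exact absurd hxy.symm (Nat.ne_of_lt (htmono y x h))

open scoped Classical in
theorem total_occurrences_in_avoid_132_321 (n i j p : ℕ) (hi : 1 ≤ i) (hj : 1 ≤ j) :
    ∑ π ∈ Finset.univ.filter
        (fun π : Equiv.Perm (Fin n) => numOcc p132 π = 0 ∧ numOcc p321 π = 0),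
      numOcc (piKLM i j p) π = (n + 2).choose (i + j + p + 2) := by
  classical
  set S := Finset.univ.filter
      (fun π : Equiv.Perm (Fin n) => numOcc p132 π = 0 ∧ numOcc p321 π = 0) with hS
  have main : ∀ (π : Equiv.Perm (Fin n)) (f : Fin (i+j+p) → Fin n),
      numOcc p132 π = 0 → numOcc p321 π = 0 → IsOccurrence (piKLM i j p) π f →
      ∃ (k l : ℕ) (hkl : k + l ≤ n), 1 ≤ k ∧ 1 ≤ l ∧ π = klmPerm n k l hkl := by
    intro π f h1 h2 hf
    rcases classify π h1 h2 with rfl | ⟨k, l, hkl, hk, hl, hπ⟩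
    · exact absurd hf (no_occ_in_one hi hj f)
    · exact ⟨k, l, hkl, hk, hl, hπ⟩
  calc ∑ π ∈ S, numOcc (piKLM i j p) π
      = ∑ π ∈ S, (Finset.univ.filter (IsOccurrence (piKLM i j p) π)).card :=
        Finset.sum_congr rfl (fun π _ => numOcc_eq_card _ _)
    _ = (S.sigma (fun π => Finset.univ.filter (IsOccurrence (piKLM i j p) π))).card :=
        (Finset.card_sigma _ _).symm
    _ = ((Finset.range (n+2)).powersetCard (i+j+p+2)).card := ?_
    _ = (n + 2).choose (i + j + p + 2) := by
        rw [Finset.card_powersetCard, Finset.card_range]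
  apply Finset.card_bij (fun a _ => enc i j p a.1 a.2)
  · rintro ⟨π, f⟩ ha
    rw [Finset.mem_sigma, Finset.mem_filter, Finset.mem_filter] at ha
    obtain ⟨⟨-, h132, h321⟩, -, hf⟩ := ha
    obtain ⟨k, l, hkl, hk, hl, hπ⟩ := main π f h132 h321 hf
    subst hπ
    show enc i j p (klmPerm n k l hkl) f ∈ _
    rw [enc, kOf_klm hk hl hkl, lOf_klm hk hl hkl]
    exact encKL_mem (glueHyp_of_occ hi hj hk hl hkl hf)
  · rintro ⟨π1, f1⟩ ha1 ⟨π2, f2⟩ ha2 heq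
    rw [Finset.mem_sigma, Finset.mem_filter, Finset.mem_filter] at ha1 ha2
    obtain ⟨⟨-, h132a, h321a⟩, -, hf1⟩ := ha1
    obtain ⟨⟨-, h132b, h321b⟩, -, hf2⟩ := ha2
    obtain ⟨k1, l1, hkl1, hk1, hl1, hπ1⟩ := main π1 f1 h132a h321a hf1
    obtain ⟨k2, l2, hkl2, hk2, hl2, hπ2⟩ := main π2 f2 h132b h321b hf2
    subst hπ1
    subst hπ2
    have H1 : GlueHyp i j p k1 l1 n f1 := glueHyp_of_occ hi hj hk1 hl1 hkl1 hf1
    have H2 : GlueHyp i j p k2 l2 n f2 := glueHyp_of_occ hi hj hk2 hl2 hkl2 hf2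
    simp only [enc, kOf_klm hk1 hl1 hkl1, lOf_klm hk1 hl1 hkl1,
      kOf_klm hk2 hl2 hkl2, lOf_klm hk2 hl2 hkl2] at heq
    have hg := glue_eq_of_encKL_eq H1 H2 heq
    have hkk : k1 = k2 := by
      have := hg i (by omega)
      rwa [glue_at_i, glue_at_i] at this
    have hll : l1 = l2 := by
      have := hg (i+j+1) (by omega)
      rw [glue_at_ij1 _ _ _ hj, glue_at_ij1 _ _ _ hj] at this
      omega
    have hff : f1 = f2 := by
      funext x
      apply Fin.ext
      have hx := x.isLt
      have e1 : fToNat f1 x.val = (f1 x).val := by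
        simp [fToNat, dif_pos hx]
      have e2 : fToNat f2 x.val = (f2 x).val := by
        simp [fToNat, dif_pos hx]
      rcases lt_or_ge x.val i with h | h
      · have := hg x.val (by omega)
        rwa [glue_at_lo _ _ _ h, glue_at_lo _ _ _ h, e1, e2] at this
      rcases lt_or_ge x.val (i+j) with h' | h'
      · have := hg (x.val+1) (by omega)
        rwa [glue_at_mid _ _ _ h h', glue_at_mid _ _ _ h h', e1, e2,
          Nat.add_left_inj] at this
      · have := hg (x.val+2) (by omega)
        rwa [glue_at_hi _ _ _ h', glue_at_hi _ _ _ h', e1, e2,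
          Nat.add_left_inj] at this
    subst hkk
    subst hll
    subst hff
    rfl
  · intro b hb
    obtain ⟨k, l, hkl, f, hk, hl, hocc, henc⟩ := encKL_surj hi hj b hb
    refine ⟨⟨klmPerm n k l hkl, f⟩, ?_, ?_⟩
    · rw [Finset.mem_sigma, Finset.mem_filter, Finset.mem_filter]
      exact ⟨⟨Finset.mem_univ _, klm_avoids_132 hkl, klm_avoids_321 hkl⟩,
        Finset.mem_univ _, hocc⟩
    · show enc i j p (klmPerm n k l hkl) f = b
      rw [enc, kOf_klm hk hl hkl, lOf_klm hk hl hkl]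
      exact henc
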